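/- Improvement of subsolutions (Theorem 3.1, fixed-point part): with Ȳ, M̄, r̄ as in the improvement construction, if in addition Ȳ_i = Y_i P-a.s. for all i = j+1,...,J (where Y is the true solution and j ∈ {0,...,J-1}), then E_j[θ_j^{low}(r̄,M)] = θ_j^{low}(r̄,M̄) = Y_j P-a.s. for any M ∈ M_D. -/

import Mathlib

open MeasureTheory
open scoped ENNReal

noncomputable section

variable {Ω : Type*} {m0 : MeasurableSpace Ω}

/-- `L^{∞-}`: membership in `L^p` for every finite `p ≥ 1`. -/
def MemLinfMinus {E : Type*} [NormedAddCommGroup E] (μ : Measure Ω) (f : Ω → E) : Prop :=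
  ∀ p : ℝ≥0∞, 1 ≤ p → p ≠ ⊤ → MemLp f p μ

/-- Euclidean dot product on `Fin D → ℝ`. -/
def dotp {D : ℕ} (x y : Fin D → ℝ) : ℝ := ∑ d, x d * y d

/-- Componentwise conditional expectation of an `ℝ^D`-valued random vector. -/
def cexpV (μ : Measure Ω) (m : MeasurableSpace Ω) {D : ℕ} (f : Ω → Fin D → ℝ) :
    Ω → Fin D → ℝ :=
  fun ω d => (μ[fun ω' => f ω' d|m]) ω

/-- The `ℝ^D`-valued process `β_j Y_j` (vector weight times scalar process). -/
def bprod {D : ℕ} (β : ℕ → Ω → Fin D → ℝ) (Y : ℕ → Ω → ℝ) (j : ℕ) : Ω → Fin D → ℝ :=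
  fun ω d => β j ω d * Y j ω

/-- Convex (Fenchel) conjugate, with values in `EReal`. -/
def econj {D : ℕ} (f : (Fin D → ℝ) → ℝ) (u : Fin D → ℝ) : EReal :=
  ⨆ z : Fin D → ℝ, ((dotp u z - f z : ℝ) : EReal)

/-- Real-valued version of the convex conjugate (meaningful where the conjugate is finite). -/
def rconj {D : ℕ} (f : (Fin D → ℝ) → ℝ) (u : Fin D → ℝ) : ℝ := (econj f u).toReal

/-- The Doob martingale of an `ℝ^D`-valued process `Z`:
`j ↦ ∑_{i=0}^{j-1} (Z_{i+1} - E_i[Z_{i+1}])`. -/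
def doobMart (μ : Measure Ω) (ℱ : Filtration ℕ m0) {D : ℕ} (Z : ℕ → Ω → Fin D → ℝ) :
    ℕ → Ω → Fin D → ℝ :=
  fun j ω d => ∑ i ∈ Finset.range j, (Z (i + 1) ω d - cexpV μ (ℱ i) (Z (i + 1)) ω d)

/-- Standing assumptions on the data `(F, β, ξ)` of the convex dynamic program:
measurability, adaptedness and convexity of the generator, polynomial growth with an
`L^{∞-}` coefficient, and integrability/adaptedness of the weights and terminal condition. -/
structure Setting (μ : Measure Ω) (ℱ : Filtration ℕ m0) (J D : ℕ)
    (F : ℕ → Ω → (Fin D → ℝ) → ℝ) (β : ℕ → Ω → Fin D → ℝ) (ξ : Ω → ℝ) : Prop where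
  F_meas : ∀ j < J, Measurable fun p : Ω × (Fin D → ℝ) => F j p.1 p.2
  F_adapted : ∀ j < J, ∀ z : Fin D → ℝ, StronglyMeasurable[ℱ j] fun ω => F j ω z
  F_convex : ∀ j < J, ∀ ω, ConvexOn ℝ Set.univ (F j ω)
  F_growth : ∃ q : ℝ, 0 ≤ q ∧ ∃ α : ℕ → Ω → ℝ,
      (∀ j < J, StronglyMeasurable[ℱ j] (α j)) ∧
      (∀ j < J, ∀ᵐ ω ∂μ, 0 ≤ α j ω) ∧ (∀ j < J, MemLinfMinus μ (α j)) ∧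
      ∀ j < J, ∀ z : Fin D → ℝ, ∀ᵐ ω ∂μ, |F j ω z| ≤ α j ω * (1 + ‖z‖ ^ q)
  β_adapted : ∀ j ≤ J, StronglyMeasurable[ℱ j] (β j)
  β_int : ∀ j ≤ J, MemLinfMinus μ (β j)
  ξ_meas : StronglyMeasurable[ℱ J] ξ
  ξ_int : MemLinfMinus μ ξ

/-- `Y` is an adapted `L^{∞-}` solution of the dynamic programming equation
`Y_j = F_j(E_j[β_{j+1} Y_{j+1}])`, `Y_J = ξ`. -/
def IsSolution (μ : Measure Ω) (ℱ : Filtration ℕ m0) (J D : ℕ)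
    (F : ℕ → Ω → (Fin D → ℝ) → ℝ) (β : ℕ → Ω → Fin D → ℝ) (ξ : Ω → ℝ)
    (Y : ℕ → Ω → ℝ) : Prop :=
  (∀ j ≤ J, StronglyMeasurable[ℱ j] (Y j) ∧ MemLinfMinus μ (Y j)) ∧
  (∀ᵐ ω ∂μ, Y J ω = ξ ω) ∧
  (∀ j < J, ∀ᵐ ω ∂μ, Y j ω = F j ω (cexpV μ (ℱ j) (bprod β Y (j + 1)) ω))

/-- Supersolution of the dynamic program. -/
def IsSupersolution (μ : Measure Ω) (ℱ : Filtration ℕ m0) (J D : ℕ)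
    (F : ℕ → Ω → (Fin D → ℝ) → ℝ) (β : ℕ → Ω → Fin D → ℝ) (ξ : Ω → ℝ)
    (Y : ℕ → Ω → ℝ) : Prop :=
  (∀ j ≤ J, StronglyMeasurable[ℱ j] (Y j) ∧ MemLinfMinus μ (Y j)) ∧
  (∀ᵐ ω ∂μ, ξ ω ≤ Y J ω) ∧
  (∀ j < J, ∀ᵐ ω ∂μ, F j ω (cexpV μ (ℱ j) (bprod β Y (j + 1)) ω) ≤ Y j ω)

/-- Subsolution of the dynamic program. -/
def IsSubsolution (μ : Measure Ω) (ℱ : Filtration ℕ m0) (J D : ℕ)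
    (F : ℕ → Ω → (Fin D → ℝ) → ℝ) (β : ℕ → Ω → Fin D → ℝ) (ξ : Ω → ℝ)
    (Y : ℕ → Ω → ℝ) : Prop :=
  (∀ j ≤ J, StronglyMeasurable[ℱ j] (Y j) ∧ MemLinfMinus μ (Y j)) ∧
  (∀ᵐ ω ∂μ, Y J ω ≤ ξ ω) ∧
  (∀ j < J, ∀ᵐ ω ∂μ, Y j ω ≤ F j ω (cexpV μ (ℱ j) (bprod β Y (j + 1)) ω))

/-- The monotonicity assumption: `Y⁽¹⁾ ≥ Y⁽²⁾` a.s. implies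
`F_j(β_{j+1} Y⁽¹⁾) ≥ F_j(β_{j+1} Y⁽²⁾)` a.s. -/
def MonoAssumption (μ : Measure Ω) (J D : ℕ)
    (F : ℕ → Ω → (Fin D → ℝ) → ℝ) (β : ℕ → Ω → Fin D → ℝ) : Prop :=
  ∀ j < J, ∀ Y1 Y2 : Ω → ℝ, MemLinfMinus μ Y1 → MemLinfMinus μ Y2 →
    (∀ᵐ ω ∂μ, Y2 ω ≤ Y1 ω) →
    ∀ᵐ ω ∂μ, F j ω (fun d => β (j + 1) ω d * Y2 ω) ≤ F j ω (fun d => β (j + 1) ω d * Y1 ω)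

/-- The class `M_D` of `ℝ^D`-valued `L^{∞-}` martingales. -/
def IsMartD (μ : Measure Ω) (ℱ : Filtration ℕ m0) {D : ℕ}
    (M : ℕ → Ω → Fin D → ℝ) : Prop :=
  Martingale M ℱ μ ∧ ∀ j, MemLinfMinus μ (M j)

/-- Admissible controls on the time indices `{j₀, ..., J-1}` (the class `A_{j₀}`). -/
def IsAdmissibleFrom (μ : Measure Ω) (ℱ : Filtration ℕ m0) (j₀ J D : ℕ)
    (F : ℕ → Ω → (Fin D → ℝ) → ℝ) (r : ℕ → Ω → Fin D → ℝ) : Prop :=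
  ∀ i, j₀ ≤ i → i < J →
    StronglyMeasurable[ℱ i] (r i) ∧ MemLinfMinus μ (r i) ∧
    (∀ᵐ ω ∂μ, econj (F i ω) (r i ω) ≠ ⊤) ∧
    MemLinfMinus μ (fun ω => rconj (F i ω) (r i ω))

/-- The lower pathwise recursion `θ^{low}(r, M)`:
`θ_J = ξ`, `θ_i = r_i^⊤ (β_{i+1} θ_{i+1}) - r_i^⊤ ΔM_{i+1} - F_i^{#}(r_i)`,
required on the time indices `{j₀, ..., J-1}`. -/
def IsThetaLowFrom (μ : Measure Ω) (j₀ J D : ℕ)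
    (F : ℕ → Ω → (Fin D → ℝ) → ℝ) (β : ℕ → Ω → Fin D → ℝ) (ξ : Ω → ℝ)
    (r M : ℕ → Ω → Fin D → ℝ) (θ : ℕ → Ω → ℝ) : Prop :=
  (∀ᵐ ω ∂μ, θ J ω = ξ ω) ∧
  ∀ i, j₀ ≤ i → i < J → ∀ᵐ ω ∂μ,
    θ i ω = dotp (r i ω) (fun d => β (i + 1) ω d * θ (i + 1) ω)
      - dotp (r i ω) (fun d => M (i + 1) ω d - M i ω d) - rconj (F i ω) (r i ω)

/-- The upper pathwise recursion `θ^{up}(M)`: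
`θ_J = ξ`, `θ_j = F_j(β_{j+1} θ_{j+1} - ΔM_{j+1})`. -/
def IsThetaUp (μ : Measure Ω) (J D : ℕ)
    (F : ℕ → Ω → (Fin D → ℝ) → ℝ) (β : ℕ → Ω → Fin D → ℝ) (ξ : Ω → ℝ)
    (M : ℕ → Ω → Fin D → ℝ) (θ : ℕ → Ω → ℝ) : Prop :=
  (∀ᵐ ω ∂μ, θ J ω = ξ ω) ∧
  ∀ j < J, ∀ᵐ ω ∂μ,
    θ j ω = F j ω (fun d => β (j + 1) ω d * θ (j + 1) ω - (M (j + 1) ω d - M j ω d))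

/-- The optimality condition `r_i^⊤ E_i[β_{i+1} Y_{i+1}] - F_i^{#}(r_i) = F_i(E_i[β_{i+1} Y_{i+1}])`
on the time indices `{j₀, ..., J-1}`. -/
def OptimalityCond (μ : Measure Ω) (ℱ : Filtration ℕ m0) (j₀ J D : ℕ)
    (F : ℕ → Ω → (Fin D → ℝ) → ℝ) (β : ℕ → Ω → Fin D → ℝ)
    (Y : ℕ → Ω → ℝ) (r : ℕ → Ω → Fin D → ℝ) : Prop :=
  ∀ i, j₀ ≤ i → i < J → ∀ᵐ ω ∂μ,
    dotp (r i ω) (cexpV μ (ℱ i) (bprod β Y (i + 1)) ω) - rconj (F i ω) (r i ω)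
      = F i ω (cexpV μ (ℱ i) (bprod β Y (i + 1)) ω)


section AuxLemmas
variable {μ : Measure Ω}

lemma MemLinfMinus.integrable {E : Type*} [NormedAddCommGroup E] {f : Ω → E}
    (h : MemLinfMinus μ f) : Integrable f μ :=
  memLp_one_iff_integrable.mp (h 1 le_rfl ENNReal.one_ne_top)

lemma MemLinfMinus.mul {f g : Ω → ℝ} (hf : MemLinfMinus μ f) (hg : MemLinfMinus μ g) :
    MemLinfMinus μ (fun ω => f ω * g ω) := by
  intro p hp hpt
  have h2p : (1 : ℝ≥0∞) ≤ 2 * p := le_trans hp (le_mul_of_one_le_left zero_le one_le_two)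
  have h2pt : (2 : ℝ≥0∞) * p ≠ ⊤ := ENNReal.mul_ne_top (by norm_num) hpt
  have : (1 : ℝ≥0∞) / p = 1 / (2 * p) + 1 / (2 * p) := by
    rw [ENNReal.div_add_div_same]
    rw [eq_comm, ENNReal.div_eq_div_iff (by positivity) hpt (by positivity) h2pt]
    ring
  haveI : ENNReal.HolderTriple (2 * p) (2 * p) p := ⟨by simp only [one_div] at this; exact this.symm⟩
  exact (hg (2 * p) h2p h2pt).smul (hf (2 * p) h2p h2pt)

lemma MemLinfMinus.sub {f g : Ω → ℝ} (hf : MemLinfMinus μ f) (hg : MemLinfMinus μ g) :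
    MemLinfMinus μ (fun ω => f ω - g ω) := fun p hp hpt => (hf p hp hpt).sub (hg p hp hpt)

lemma MemLinfMinus.comp_eval {D : ℕ} {f : Ω → Fin D → ℝ} (hf : MemLinfMinus μ f) (d : Fin D) :
    MemLinfMinus μ (fun ω => f ω d) := by
  intro p hp hpt
  refine MemLp.of_le (hf p hp hpt) ?_ (Filter.Eventually.of_forall fun ω => ?_)
  · exact (continuous_apply d).comp_aestronglyMeasurable (hf p hp hpt).1
  · exact norm_le_pi_norm (f ω) d

lemma MemLinfMinus.sum {ι : Type*} {s : Finset ι} {f : ι → Ω → ℝ}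
    (hf : ∀ i ∈ s, MemLinfMinus μ (f i)) :
    MemLinfMinus μ (fun ω => ∑ i ∈ s, f i ω) := by
  intro p hp hpt
  have h := memLp_finset_sum' s (fun i hi => hf i hi p hp hpt)
  have he : (∑ i ∈ s, f i) = fun ω => ∑ i ∈ s, f i ω := by funext ω; simp
  rwa [he] at h

lemma integrable_eval {D : ℕ} {f : Ω → Fin D → ℝ} {μ : Measure Ω} (hf : Integrable f μ)
    (d : Fin D) : Integrable (fun ω => f ω d) μ :=
  (ContinuousLinearMap.proj (R := ℝ) (φ := fun _ : Fin D => ℝ) d).integrable_comp hf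

lemma setIntegral_eval {D : ℕ} {f : Ω → Fin D → ℝ} {μ : Measure Ω} (hf : Integrable f μ)
    (d : Fin D) (s : Set Ω) : ∫ x in s, f x d ∂μ = (∫ x in s, f x ∂μ) d := by
  have h := (ContinuousLinearMap.proj (R := ℝ) (φ := fun _ : Fin D => ℝ)
    d).integral_comp_comm (μ := μ.restrict s) hf.integrableOn
  simpa using h

lemma condexp_eval {Ω' : Type*} {m mO : MeasurableSpace Ω'} {μ : Measure Ω'}
    (hm : m ≤ mO) [SigmaFinite (μ.trim hm)]
    {D : ℕ} {f : Ω' → Fin D → ℝ} (hf : Integrable f μ) (d : Fin D) :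
    (μ[fun ω => f ω d|m]) =ᵐ[μ] fun ω => (μ[f|m]) ω d := by
  have hfd : Integrable (fun ω => f ω d) μ := integrable_eval hf d
  have hgd : Integrable (fun ω => (μ[f|m]) ω d) μ := integrable_eval integrable_condExp d
  refine (ae_eq_condExp_of_forall_setIntegral_eq hm hfd
    (fun s hs hμs => hgd.integrableOn) (fun s hs hμs => ?_)
    (StronglyMeasurable.aestronglyMeasurable ((continuous_apply d).comp_stronglyMeasurable
      (stronglyMeasurable_condExp (m := m) (μ := μ) (f := f))))).symm
  rw [setIntegral_eval integrable_condExp d s, setIntegral_eval hf d s,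
    setIntegral_condExp hm hf hs]

end AuxLemmas

/-- Improvement of subsolutions, fixed-point part: with `Ȳ`, `M̄` (the Doob
martingale of `βȲ`) and `r̄` as in the improvement construction, if `Ȳ_i = Y_i` a.s. for all
`i = j+1,…,J`, then `E_j[θ_j^{low}(r̄,M)] = θ_j^{low}(r̄,M̄) = Y_j` `P`-a.s. for any `M ∈ M_D`. -/
theorem subsolution_improvement_fixed_point
    (μ : Measure Ω) [IsProbabilityMeasure μ] (ℱ : Filtration ℕ m0)
    (J D : ℕ) (F : ℕ → Ω → (Fin D → ℝ) → ℝ) (β : ℕ → Ω → Fin D → ℝ) (ξ : Ω → ℝ)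
    (hset : Setting μ ℱ J D F β ξ) (hmono : MonoAssumption μ J D F β)
    (Y : ℕ → Ω → ℝ) (hY : IsSolution μ ℱ J D F β ξ Y)
    (Ybar : ℕ → Ω → ℝ) (hYbar : IsSubsolution μ ℱ J D F β ξ Ybar)
    (r : ℕ → Ω → Fin D → ℝ)
    (hr : IsAdmissibleFrom μ ℱ 0 J D F r)
    (hropt : OptimalityCond μ ℱ 0 J D F β Ybar r)
    (M : ℕ → Ω → Fin D → ℝ) (hM : IsMartD μ ℱ M)
    (θ θbar : ℕ → Ω → ℝ)
    (hθ : IsThetaLowFrom μ 0 J D F β ξ r M θ)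
    (hθbar : IsThetaLowFrom μ 0 J D F β ξ r (doobMart μ ℱ (bprod β Ybar)) θbar)
    (j : ℕ) (hj : j < J)
    (heq : ∀ i, j + 1 ≤ i → i ≤ J → Ybar i =ᵐ[μ] Y i) :
    (μ[θ j|ℱ j]) =ᵐ[μ] Y j ∧ θbar j =ᵐ[μ] Y j := by
  have hVeq : ∀ i, j ≤ i → i < J →
      (fun ω => cexpV μ (ℱ i) (bprod β Ybar (i + 1)) ω) =ᵐ[μ]
        (fun ω => cexpV μ (ℱ i) (bprod β Y (i + 1)) ω) := by
    intro i hji hiJ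
    have hd : ∀ d : Fin D,
        (μ[fun ω' => bprod β Ybar (i + 1) ω' d|ℱ i]) =ᵐ[μ]
          (μ[fun ω' => bprod β Y (i + 1) ω' d|ℱ i]) := by
      intro d
      apply condExp_congr_ae
      filter_upwards [heq (i + 1) (by omega) (by omega)] with ω hω
      simp only [bprod, hω]
    have hall := ae_all_iff.mpr hd
    filter_upwards [hall] with ω hω
    funext d
    exact hω d
  have hCD : ∀ i, j ≤ i → i < J →
      (fun ω => rconj (F i ω) (r i ω)) =ᵐ[μ]
        (fun ω => dotp (r i ω) (cexpV μ (ℱ i) (bprod β Y (i + 1)) ω) - Y i ω) := by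
    intro i hji hiJ
    filter_upwards [hropt i (Nat.zero_le _) hiJ, hVeq i hji hiJ, hY.2.2 i hiJ]
      with ω h1 h2 h3
    rw [h2] at h1
    rw [← h3] at h1
    linarith
  -- the θbar claim
  have thetabar_claim : ∀ n i, i + n = J → j ≤ i → θbar i =ᵐ[μ] Y i := by
    intro n
    induction n with
    | zero =>
      intro i hi _
      have hiJ : i = J := by omega
      rw [hiJ]
      filter_upwards [hθbar.1, hY.2.1] with ω h1 h2
      rw [h1, h2]
    | succ n ih =>
      intro i hi hji
      have hiJ : i < J := by omega
      have hnext : θbar (i + 1) =ᵐ[μ] Y (i + 1) := ih (i + 1) (by omega) (by omega)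
      filter_upwards [hθbar.2 i (Nat.zero_le _) hiJ, hnext, heq (i + 1) (by omega) (by omega),
        hropt i (Nat.zero_le _) hiJ, hVeq i hji hiJ, hY.2.2 i hiJ] with ω h1 h2 h3 h4 h5 h6
      rw [h1]
      have e1 : (fun d => doobMart μ ℱ (bprod β Ybar) (i + 1) ω d
          - doobMart μ ℱ (bprod β Ybar) i ω d)
          = fun d => bprod β Ybar (i + 1) ω d - cexpV μ (ℱ i) (bprod β Ybar (i + 1)) ω d := by
        funext d
        simp only [doobMart, Finset.sum_range_succ, Finset.sum_sub_distrib]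
        ring
      rw [e1]
      have e2 : θbar (i + 1) ω = Ybar (i + 1) ω := h2.trans h3.symm
      simp only [e2]
      have e3 : dotp (r i ω) (fun d => β (i + 1) ω d * Ybar (i + 1) ω)
          - dotp (r i ω) (fun d => bprod β Ybar (i + 1) ω d
              - cexpV μ (ℱ i) (bprod β Ybar (i + 1)) ω d)
          = dotp (r i ω) (cexpV μ (ℱ i) (bprod β Ybar (i + 1)) ω) := by
        simp only [dotp, bprod, ← Finset.sum_sub_distrib]
        refine Finset.sum_congr rfl fun d _ => by ring
      rw [e3, h4, h5, ← h6]
  -- the θ claim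
  have theta_claim : ∀ n i, i + n = J → j ≤ i →
      MemLinfMinus μ (θ i) ∧ (μ[θ i|ℱ i]) =ᵐ[μ] Y i := by
    intro n
    induction n with
    | zero =>
      intro i hi _
      have hiJ : i = J := by omega
      have hYJ : θ i =ᵐ[μ] Y i := by
        rw [hiJ]
        filter_upwards [hθ.1, hY.2.1] with ω h1 h2
        rw [h1, h2]
      refine ⟨fun p hp hpt => MemLp.ae_eq hYJ.symm ((hY.1 i hiJ.le).2 p hp hpt), ?_⟩
      calc μ[θ i|ℱ i] =ᵐ[μ] μ[Y i|ℱ i] := condExp_congr_ae hYJ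
        _ = Y i := condExp_of_stronglyMeasurable (ℱ.le i) (hY.1 i hiJ.le).1
            (hY.1 i hiJ.le).2.integrable
    | succ n ih =>
      intro i hi hji
      have hiJ : i < J := by omega
      obtain ⟨hmem1, hce1⟩ := ih (i + 1) (by omega) (by omega)
      have hrS : StronglyMeasurable[ℱ i] (r i) := (hr i (Nat.zero_le _) hiJ).1
      have hrM : MemLinfMinus μ (r i) := (hr i (Nat.zero_le _) hiJ).2.1
      have hCM : MemLinfMinus μ (fun ω => rconj (F i ω) (r i ω)) :=
        (hr i (Nat.zero_le _) hiJ).2.2.2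
      have hβM : MemLinfMinus μ (β (i + 1)) := hset.β_int (i + 1) (by omega)
      set A : Ω → ℝ := fun ω => ∑ d, r i ω d * (β (i + 1) ω d * θ (i + 1) ω) with hAdef
      set B : Ω → ℝ := fun ω => ∑ d, r i ω d * (M (i + 1) ω d - M i ω d) with hBdef
      set C : Ω → ℝ := fun ω => rconj (F i ω) (r i ω) with hCdef
      set V : Ω → Fin D → ℝ := fun ω => cexpV μ (ℱ i) (bprod β Y (i + 1)) ω with hVdef
      have haM : ∀ d : Fin D,
          MemLinfMinus μ (fun ω => r i ω d * (β (i + 1) ω d * θ (i + 1) ω)) :=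
        fun d => (hrM.comp_eval d).mul ((hβM.comp_eval d).mul hmem1)
      have hBdM : ∀ d : Fin D,
          MemLinfMinus μ (fun ω => r i ω d * (M (i + 1) ω d - M i ω d)) :=
        fun d => (hrM.comp_eval d).mul
          (((hM.2 (i + 1)).comp_eval d).sub ((hM.2 i).comp_eval d))
      have hAM : MemLinfMinus μ A := MemLinfMinus.sum fun d _ => haM d
      have hBM : MemLinfMinus μ B := MemLinfMinus.sum fun d _ => hBdM d
      have hθΦ : θ i =ᵐ[μ] A - B - C := by
        filter_upwards [hθ.2 i (Nat.zero_le _) hiJ] with ω h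
        rw [h]
        rfl
      constructor
      · intro p hp hpt
        exact MemLp.ae_eq hθΦ.symm
          (((hAM p hp hpt).sub (hBM p hp hpt)).sub (hCM p hp hpt))
      -- the conditional expectation computation
      have hb_d : ∀ d : Fin D,
          (μ[fun ω => β (i + 1) ω d * θ (i + 1) ω|ℱ i]) =ᵐ[μ] fun ω => V ω d := by
        intro d
        have hβS : StronglyMeasurable[ℱ (i + 1)] fun ω => β (i + 1) ω d :=
          (continuous_apply d).comp_stronglyMeasurable (hset.β_adapted (i + 1) (by omega))
        have hint1 : Integrable (fun ω => β (i + 1) ω d * θ (i + 1) ω) μ :=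
          ((hβM.comp_eval d).mul hmem1).integrable
        have hpull : (μ[fun ω => β (i + 1) ω d * θ (i + 1) ω|ℱ (i + 1)]) =ᵐ[μ]
            (fun ω => β (i + 1) ω d) * μ[θ (i + 1)|ℱ (i + 1)] :=
          condExp_mul_of_stronglyMeasurable_left hβS hint1 hmem1.integrable
        have hinner : (μ[fun ω => β (i + 1) ω d * θ (i + 1) ω|ℱ (i + 1)]) =ᵐ[μ]
            fun ω => β (i + 1) ω d * Y (i + 1) ω := by
          filter_upwards [hpull, hce1] with ω h1 h2
          rw [h1, Pi.mul_apply, h2]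
        calc (μ[fun ω => β (i + 1) ω d * θ (i + 1) ω|ℱ i])
            =ᵐ[μ] μ[μ[fun ω => β (i + 1) ω d * θ (i + 1) ω|ℱ (i + 1)]|ℱ i] :=
              (condExp_condExp_of_le (ℱ.mono (Nat.le_succ i)) (ℱ.le (i + 1))).symm
          _ =ᵐ[μ] μ[fun ω => β (i + 1) ω d * Y (i + 1) ω|ℱ i] := condExp_congr_ae hinner
          _ = fun ω => V ω d := rfl
      have hA_d : ∀ d : Fin D,
          (μ[fun ω => r i ω d * (β (i + 1) ω d * θ (i + 1) ω)|ℱ i]) =ᵐ[μ]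
            fun ω => r i ω d * V ω d := by
        intro d
        have hpull : (μ[fun ω => r i ω d * (β (i + 1) ω d * θ (i + 1) ω)|ℱ i]) =ᵐ[μ]
            (fun ω => r i ω d) * μ[fun ω => β (i + 1) ω d * θ (i + 1) ω|ℱ i] :=
          condExp_mul_of_stronglyMeasurable_left
            ((continuous_apply d).comp_stronglyMeasurable hrS)
            (haM d).integrable ((hβM.comp_eval d).mul hmem1).integrable
        filter_upwards [hpull, hb_d d] with ω h1 h2
        rw [h1, Pi.mul_apply, h2]
      have stepA : (μ[A|ℱ i]) =ᵐ[μ] fun ω => ∑ d, r i ω d * V ω d := by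
        have hsum := condExp_finsetSum
          (f := fun (d : Fin D) (ω : Ω) => r i ω d * (β (i + 1) ω d * θ (i + 1) ω))
          (s := Finset.univ) (m := ℱ i) (fun d _ => (haM d).integrable)
        have hAeq : A = ∑ d : Fin D,
            (fun ω => r i ω d * (β (i + 1) ω d * θ (i + 1) ω)) := by
          funext ω
          simp [hAdef]
        rw [hAeq]
        refine hsum.trans ?_
        have hall := ae_all_iff.mpr hA_d
        filter_upwards [hall] with ω hω
        simp only [Finset.sum_apply]
        exact Finset.sum_congr rfl fun d _ => hω d
      have hΔ_d : ∀ d : Fin D,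
          (μ[fun ω => M (i + 1) ω d - M i ω d|ℱ i]) =ᵐ[μ] fun _ => (0 : ℝ) := by
        intro d
        have hMint1 : Integrable (M (i + 1)) μ := (hM.2 (i + 1)).integrable
        have h1 : (μ[fun ω => M (i + 1) ω d|ℱ i]) =ᵐ[μ]
            fun ω => (μ[M (i + 1)|ℱ i]) ω d := condexp_eval (ℱ.le i) hMint1 d
        have h2 : (μ[M (i + 1)|ℱ i]) =ᵐ[μ] M i := hM.1.condExp_ae_eq (Nat.le_succ i)
        have h3 : (μ[fun ω => M i ω d|ℱ i]) = fun ω => M i ω d :=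
          condExp_of_stronglyMeasurable (ℱ.le i)
            ((continuous_apply d).comp_stronglyMeasurable (hM.1.stronglyAdapted i))
            (integrable_eval (hM.2 i).integrable d)
        have hsub := condExp_sub (m := ℱ i)
          (integrable_eval hMint1 d) (integrable_eval (hM.2 i).integrable d)
          (f := fun ω => M (i + 1) ω d) (g := fun ω => M i ω d)
        refine (condExp_congr_ae (by filter_upwards with ω; rfl)).trans (hsub.trans ?_)
        filter_upwards [h1, h2] with ω hω1 hω2
        simp only [Pi.sub_apply, hω1, h3]
        rw [hω2]
        ring
      have stepB : (μ[B|ℱ i]) =ᵐ[μ] fun _ => (0 : ℝ) := by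
        have hsum := condExp_finsetSum
          (f := fun (d : Fin D) (ω : Ω) => r i ω d * (M (i + 1) ω d - M i ω d))
          (s := Finset.univ) (m := ℱ i) (fun d _ => (hBdM d).integrable)
        have hBeq : B = ∑ d : Fin D,
            (fun ω => r i ω d * (M (i + 1) ω d - M i ω d)) := by
          funext ω
          simp [hBdef]
        rw [hBeq]
        refine hsum.trans ?_
        have hB_d : ∀ d : Fin D,
            (μ[fun ω => r i ω d * (M (i + 1) ω d - M i ω d)|ℱ i]) =ᵐ[μ]
              fun _ => (0 : ℝ) := by
          intro d
          have hpull : (μ[fun ω => r i ω d * (M (i + 1) ω d - M i ω d)|ℱ i]) =ᵐ[μ]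
              (fun ω => r i ω d) * μ[fun ω => M (i + 1) ω d - M i ω d|ℱ i] :=
            condExp_mul_of_stronglyMeasurable_left
              ((continuous_apply d).comp_stronglyMeasurable hrS)
              (hBdM d).integrable
              (((hM.2 (i + 1)).comp_eval d).sub ((hM.2 i).comp_eval d)).integrable
          filter_upwards [hpull, hΔ_d d] with ω h1 h2
          rw [h1, Pi.mul_apply, h2, mul_zero]
        have hall := ae_all_iff.mpr hB_d
        filter_upwards [hall] with ω hω
        simp only [Finset.sum_apply]
        rw [Finset.sum_congr rfl fun d _ => hω d]
        simp
      have hCDi := hCD i hji hiJ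
      have stepC : (μ[C|ℱ i]) =ᵐ[μ]
          fun ω => dotp (r i ω) (V ω) - Y i ω := by
        have hDSM : StronglyMeasurable[ℱ i] fun ω => dotp (r i ω) (V ω) - Y i ω := by
          refine StronglyMeasurable.sub ?_ (hY.1 i hiJ.le).1
          have he : (fun ω => dotp (r i ω) (V ω))
              = fun ω => ∑ d, r i ω d * V ω d := rfl
          rw [he]
          refine Finset.stronglyMeasurable_fun_sum _ fun d _ => ?_
          exact ((continuous_apply d).comp_stronglyMeasurable hrS).mul
            stronglyMeasurable_condExp
        have hDint : Integrable (fun ω => dotp (r i ω) (V ω) - Y i ω) μ :=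
          hCM.integrable.congr hCDi
        calc (μ[C|ℱ i]) =ᵐ[μ] μ[fun ω => dotp (r i ω) (V ω) - Y i ω|ℱ i] :=
            condExp_congr_ae hCDi
          _ = fun ω => dotp (r i ω) (V ω) - Y i ω :=
            condExp_of_stronglyMeasurable (ℱ.le i) hDSM hDint
      calc (μ[θ i|ℱ i]) =ᵐ[μ] μ[A - B - C|ℱ i] := condExp_congr_ae hθΦ
        _ =ᵐ[μ] μ[A - B|ℱ i] - μ[C|ℱ i] :=
          condExp_sub (hAM.integrable.sub hBM.integrable) hCM.integrable _
        _ =ᵐ[μ] (μ[A|ℱ i] - μ[B|ℱ i]) - μ[C|ℱ i] :=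
          (condExp_sub hAM.integrable hBM.integrable _).sub (Filter.EventuallyEq.refl _ _)
        _ =ᵐ[μ] Y i := by
          filter_upwards [stepA, stepB, stepC] with ω hA hB hC
          simp only [Pi.sub_apply, hA, hB, hC, dotp]
          ring
  refine ⟨?_, ?_⟩
  · exact (theta_claim (J - j) j (by omega) le_rfl).2
  · exact thetabar_claim (J - j) j (by omega) le_rfl


end
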